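/- Let R be a finite set, P a probability mass function on R with full support, q : R → ℝ, λ > 0, and let α > max_r q(r) satisfy Σ_r λP(r)/(α − q(r)) = 1. Define y*(r) = λP(r)/(α − q(r)). Then y* is a probability mass function on R and for every probability mass function y on R with full support, q·y − λ·KL(P‖y) ≤ q·y* − λ·KL(P‖y*), i.e., y* maximizes the reverse-KL-regularized linear objective over the simplex. -/

import Mathlib

/-- The candidate `y*(r) = λ P(r) / (α − q(r))` is a probability mass function and
maximizes the reverse-KL-regularized linear objective over full-support pmfs. -/
theorem stmt_2 {R : Type*} [Fintype R] [Nonempty R]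
    (q : R → ℝ) (P : R → ℝ) (hP0 : ∀ r, 0 < P r) (hP1 : ∑ r, P r = 1)
    (lam : ℝ) (hlam : 0 < lam)
    (α : ℝ) (hα : Finset.univ.sup' Finset.univ_nonempty q < α)
    (hnorm : ∑ r, lam * P r / (α - q r) = 1)
    (ystar : R → ℝ) (hystar : ∀ r, ystar r = lam * P r / (α - q r)) :
    (∀ r, 0 ≤ ystar r) ∧ (∑ r, ystar r = 1) ∧
      (∀ y : R → ℝ, (∀ r, 0 < y r) → (∑ r, y r = 1) →
        (∑ r, q r * y r) - lam * ∑ r, P r * Real.log (P r / y r)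
          ≤ (∑ r, q r * ystar r) - lam * ∑ r, P r * Real.log (P r / ystar r)) := by
  have hαq : ∀ r, 0 < α - q r := fun r =>
    sub_pos.2 ((Finset.le_sup' q (Finset.mem_univ r)).trans_lt hα)
  have hy0 : ∀ r, 0 < ystar r := fun r => by
    rw [hystar]; exact div_pos (mul_pos hlam (hP0 r)) (hαq r)
  have hsum : ∑ r, ystar r = 1 := by
    simp_rw [hystar]; exact hnorm
  refine ⟨fun r => (hy0 r).le, hsum, ?_⟩
  intro y hy hy1
  have hkey : ∀ r, lam * P r = (α - q r) * ystar r := fun r => by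
    rw [hystar]
    field_simp
    rw [mul_div_cancel_right₀ _ (hαq r).ne']
  have hS : ∑ r, q r * ystar r = α - lam := by
    have h1 : ∑ r, (α - q r) * ystar r = lam := by
      simp_rw [← hkey]
      rw [← Finset.mul_sum, hP1, mul_one]
    have h2 : ∑ r, α * ystar r = α := by
      rw [← Finset.mul_sum, hsum, mul_one]
    have h3 : ∑ r, q r * ystar r = ∑ r, (α * ystar r - (α - q r) * ystar r) := by
      apply Finset.sum_congr rfl; intro r _; ring
    rw [h3, Finset.sum_sub_distrib, h1, h2]
  have hpt : ∀ r ∈ Finset.univ (α := R),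
      q r * ystar r - α * y r + lam * P r ≤
      q r * ystar r - q r * y r +
        lam * (P r * Real.log (P r / y r) - P r * Real.log (P r / ystar r)) := by
    intro r _
    have hlog : Real.log (y r / ystar r) ≤ y r / ystar r - 1 :=
      Real.log_le_sub_one_of_pos (div_pos (hy r) (hy0 r))
    have hld : P r * Real.log (P r / y r) - P r * Real.log (P r / ystar r)
        = -(P r * Real.log (y r / ystar r)) := by
      rw [Real.log_div (ne_of_gt (hP0 r)) (ne_of_gt (hy r)),
        Real.log_div (ne_of_gt (hP0 r)) (ne_of_gt (hy0 r)),
        Real.log_div (ne_of_gt (hy r)) (ne_of_gt (hy0 r))]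
      ring
    rw [hld]
    have h2 : lam * (P r * Real.log (y r / ystar r)) ≤ lam * (P r * (y r / ystar r - 1)) :=
      mul_le_mul_of_nonneg_left (mul_le_mul_of_nonneg_left hlog (hP0 r).le) hlam.le
    have hdiv : lam * P r * (y r / ystar r) = (α - q r) * y r := by
      rw [hkey r, mul_right_comm, mul_assoc, div_mul_cancel₀ _ (hy0 r).ne']
    have h3 : lam * (P r * (y r / ystar r - 1)) = (α - q r) * y r - lam * P r := by
      have h0 : lam * (P r * (y r / ystar r - 1)) = lam * P r * (y r / ystar r) - lam * P r := by
        ring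
      rw [h0, hdiv]
    rw [h3] at h2
    linarith
  have hsumle := Finset.sum_le_sum hpt
  have hL : ∑ r, (q r * ystar r - α * y r + lam * P r) = 0 := by
    rw [Finset.sum_add_distrib, Finset.sum_sub_distrib, hS, ← Finset.mul_sum,
      ← Finset.mul_sum, hy1, hP1]
    ring
  have hR : ∑ r, (q r * ystar r - q r * y r +
        lam * (P r * Real.log (P r / y r) - P r * Real.log (P r / ystar r)))
      = ((∑ r, q r * ystar r) - lam * ∑ r, P r * Real.log (P r / ystar r))
        - ((∑ r, q r * y r) - lam * ∑ r, P r * Real.log (P r / y r)) := by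
    rw [Finset.mul_sum, Finset.mul_sum, ← Finset.sum_sub_distrib, ← Finset.sum_sub_distrib,
      ← Finset.sum_sub_distrib]
    apply Finset.sum_congr rfl; intro r _; ring
  rw [hL, hR] at hsumle
  linarith
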